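/- arXiv:2604.26929 — 8 statements merged into one kernel-verified Lean document; each statement's English description precedes it below -/
import Mathlib

section
/- Let x_1 < ... < x_k be real numbers with k ≥ 2, q > 0, Z the k×k matrix with Z_{ij} = e^{-q|x_i - x_j|}, and a_r = e^{-q(x_{r+1}-x_r)}. Define w_1 = 1/(1+a_1), w_k = 1/(1+a_{k-1}), and w_i = 1/(1+a_{i-1}) + 1/(1+a_i) - 1 for 1 < i < k. Then Zw = 1 (the all-ones vector). -/
theorem stmt2 (k : ℕ) (hk : 2 ≤ k) (q : ℝ) (hq : 0 < q) (x : ℕ → ℝ)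
    (hx : ∀ r, r + 1 < k → x r < x (r + 1))
    (Z : Matrix (Fin k) (Fin k) ℝ)
    (hZ : ∀ i j : Fin k, Z i j = Real.exp (-(q * |x i - x j|)))
    (a : ℕ → ℝ) (ha : ∀ r, a r = Real.exp (-(q * (x (r + 1) - x r))))
    (w : Fin k → ℝ)
    (hw : ∀ i : Fin k,
      w i = if (i : ℕ) = 0 then 1 / (1 + a 0)
            else if (i : ℕ) = k - 1 then 1 / (1 + a (k - 2))
            else 1 / (1 + a ((i : ℕ) - 1)) + 1 / (1 + a i) - 1) :
    Z.mulVec w = fun _ => 1 := by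
  set u : ℕ → ℝ := fun n => Real.exp (q * x n) with hu
  set v : ℕ → ℝ := fun n => Real.exp (-(q * x n)) with hv
  set W : ℕ → ℝ := fun j => if h : j < k then w ⟨j, h⟩ else 0 with hWdef
  have ha_pos : ∀ n, 0 < a n := fun n => by rw [ha]; exact Real.exp_pos _
  have hane : ∀ n, (1 : ℝ) + a n ≠ 0 := fun n => by have := ha_pos n; linarith
  have huv : ∀ n, u n * v n = 1 := fun n => by
    simp only [hu, hv, ← Real.exp_add]
    simp
  have hau : ∀ n, a n * u (n + 1) = u n := fun n => by
    rw [ha]; simp only [hu, ← Real.exp_add]; congr 1; ring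
  have hav : ∀ n, a n * v n = v (n + 1) := fun n => by
    rw [ha]; simp only [hv, ← Real.exp_add]; congr 1; ring
  have hmono : ∀ n, n < k → ∀ m, m ≤ n → x m ≤ x n := by
    intro n
    induction n with
    | zero => intro _ m hm; simp [Nat.le_zero.mp hm]
    | succ p ih =>
      intro hpk m hm
      rcases Nat.eq_or_lt_of_le hm with h | h
      · rw [h]
      · have h1 : m ≤ p := Nat.lt_succ_iff.mp h
        have h2 := ih (by omega) m h1
        have h3 := hx p (by omega)
        linarith
  have hW0 : W 0 = 1 / (1 + a 0) := by
    have h0 : (0 : ℕ) < k := by omega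
    simp only [hWdef]
    rw [dif_pos h0, hw ⟨0, h0⟩]
    simp
  have hWlast : W (k - 1) = 1 / (1 + a (k - 2)) := by
    have h1 : k - 1 < k := by omega
    simp only [hWdef]
    rw [dif_pos h1, hw ⟨k - 1, h1⟩]
    have h2 : k - 1 ≠ 0 := by omega
    simp [h2]
  have hWmid : ∀ n, 0 < n → n < k - 1 → W n = 1 / (1 + a (n - 1)) + 1 / (1 + a n) - 1 := by
    intro n h0 h1
    have hnk : n < k := by omega
    simp only [hWdef]
    rw [dif_pos hnk, hw ⟨n, hnk⟩]
    have h2 : n ≠ 0 := by omega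
    have h3 : n ≠ k - 1 := by omega
    simp [h2, h3]
  have hA : ∀ n, n + 1 < k → (∑ j ∈ Finset.range (n + 1), u j * W j) = u n / (1 + a n) := by
    intro n
    induction n with
    | zero =>
      intro _
      rw [Finset.sum_range_one, hW0]
      ring
    | succ p ih =>
      intro hp
      have hp' : p + 1 < k := by omega
      rw [Finset.sum_range_succ, ih hp', hWmid (p + 1) (by omega) (by omega)]
      rw [← hau p]
      have h2 := hane p
      have h3 := hane (p + 1)
      simp only [Nat.add_sub_cancel]
      field_simp
      ring
  have hC : ∀ t m, m + t = k - 1 → 0 < m →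
      (∑ j ∈ Finset.Ico m k, v j * W j) = v m / (1 + a (m - 1)) := by
    intro t
    induction t with
    | zero =>
      intro m hm h0
      have hmk : m = k - 1 := by omega
      subst hmk
      have hsing : Finset.Ico (k - 1) k = {k - 1} := by
        ext j; simp only [Finset.mem_Ico, Finset.mem_singleton]; omega
      rw [hsing, Finset.sum_singleton, hWlast]
      have : k - 1 - 1 = k - 2 := by omega
      rw [this]
      ring
    | succ p ih =>
      intro m hm h0
      have hmk : m < k - 1 := by omega
      have hmk' : m < k := by omega
      rw [Finset.sum_eq_sum_Ico_succ_bot hmk']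
      rw [ih (m + 1) (by omega) (by omega)]
      rw [hWmid m h0 hmk]
      rw [← hav m]
      have h2 := hane (m - 1)
      have h3 := hane m
      have h4 : m + 1 - 1 = m := by omega
      rw [h4]
      field_simp
      ring
  funext i
  simp only [Matrix.mulVec, dotProduct]
  have e1 : ∀ j : Fin k, Z i j * w j
      = (fun n => Real.exp (-(q * |x ↑i - x n|)) * W n) ↑j := by
    intro j
    rw [hZ]
    simp only [hWdef]
    rw [dif_pos j.isLt]
  have e2 : (∑ j : Fin k, Z i j * w j)
      = ∑ j ∈ Finset.range k, Real.exp (-(q * |x ↑i - x j|)) * W j := by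
    rw [← Fin.sum_univ_eq_sum_range (fun n => Real.exp (-(q * |x ↑i - x n|)) * W n) k]
    exact Finset.sum_congr rfl fun j _ => e1 j
  rw [e2]
  have hik : (↑i : ℕ) + 1 ≤ k := i.isLt
  rw [Finset.range_eq_Ico, ← Finset.sum_Ico_consecutive _ (Nat.zero_le ((↑i : ℕ) + 1)) hik]
  have hleft : (∑ j ∈ Finset.Ico 0 ((↑i : ℕ) + 1), Real.exp (-(q * |x ↑i - x j|)) * W j)
      = v ↑i * ∑ j ∈ Finset.range ((↑i : ℕ) + 1), u j * W j := by
    rw [Finset.mul_sum, ← Finset.range_eq_Ico]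
    refine Finset.sum_congr rfl fun j hj => ?_
    have hj' : j ≤ (↑i : ℕ) := by
      have := Finset.mem_range.mp hj; omega
    have hxx : x j ≤ x ↑i := hmono ↑i i.isLt j hj'
    rw [abs_of_nonneg (by linarith)]
    have he : Real.exp (-(q * (x ↑i - x j))) = Real.exp (-(q * x ↑i)) * Real.exp (q * x j) := by
      rw [← Real.exp_add]; congr 1; ring
    rw [he]
    simp only [hu, hv]
    ring
  have hright : (∑ j ∈ Finset.Ico ((↑i : ℕ) + 1) k, Real.exp (-(q * |x ↑i - x j|)) * W j)
      = u ↑i * ∑ j ∈ Finset.Ico ((↑i : ℕ) + 1) k, v j * W j := by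
    rw [Finset.mul_sum]
    refine Finset.sum_congr rfl fun j hj => ?_
    obtain ⟨hj1, hj2⟩ := Finset.mem_Ico.mp hj
    have hxx : x ↑i ≤ x j := hmono j hj2 ↑i (by omega)
    rw [abs_of_nonpos (by linarith)]
    have he : Real.exp (-(q * -(x ↑i - x j))) = Real.exp (q * x ↑i) * Real.exp (-(q * x j)) := by
      rw [← Real.exp_add]; congr 1; ring
    rw [he]
    simp only [hu, hv]
    ring
  rcases Nat.lt_or_ge ((↑i : ℕ) + 1) k with hcase | hcase
  · rw [hleft, hright, hA ↑i hcase,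
      hC (k - 1 - ((↑i : ℕ) + 1)) ((↑i : ℕ) + 1) (by omega) (by omega)]
    have h4 : (↑i : ℕ) + 1 - 1 = (↑i : ℕ) := by omega
    rw [h4, ← hav ↑i]
    have h1 := huv ↑i
    have h2 := hane (↑i : ℕ)
    field_simp
    linear_combination h1
  · have hieq : (↑i : ℕ) = k - 1 := by omega
    rw [hleft, hright]
    have hCk : Finset.Ico ((↑i : ℕ) + 1) k = ∅ := by
      apply Finset.Ico_eq_empty; omega
    rw [hCk, Finset.sum_empty, mul_zero, add_zero, hieq]
    have hAk : (∑ j ∈ Finset.range (k - 1), u j * W j) = u (k - 2) / (1 + a (k - 2)) := by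
      have h5 := hA (k - 2) (by omega)
      rwa [show k - 2 + 1 = k - 1 from by omega] at h5
    rw [Finset.sum_range_succ, hAk, hWlast]
    have h1 : a (k - 2) * u (k - 1) = u (k - 2) := by
      have h6 := hau (k - 2)
      rwa [show k - 2 + 1 = k - 1 from by omega] at h6
    rw [← h1]
    have h2 := huv (k - 1)
    have h3 := hane (k - 2)
    field_simp
    linear_combination (1 + a (k - 2)) * h2
end

section
/- Let x_1 < ... < x_k be real numbers, q > 0, and let Z be the k×k matrix with Z_{ij} = e^{-q|x_i - x_j|}. Then Z is invertible and 1^T Z^{-1} 1 = 1 + Σ_{r=1}^{k-1} tanh(q(x_{r+1} - x_r)/2). -/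
private lemma sum_eq_pair {α β : Type*} [Fintype α] [DecidableEq α] [AddCommMonoid β]
    (f : α → β) (a b : α) (hab : a ≠ b)
    (h0 : ∀ c, c ≠ a → c ≠ b → f c = 0) : ∑ c, f c = f a + f b := by
  rw [← Finset.sum_subset (Finset.subset_univ {a, b})
      (fun c _ hc => h0 c (fun h => hc (by simp [h])) (fun h => hc (by simp [h])))]
  rw [Finset.sum_pair hab]

private lemma tanh_half (d : ℝ) :
    Real.tanh (d / 2) = (1 - Real.exp (-d)) / (1 + Real.exp (-d)) := by
  rw [Real.tanh_eq_sinh_div_cosh, Real.sinh_eq, Real.cosh_eq]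
  have h1 : Real.exp (-d) = Real.exp (-(d/2)) * Real.exp (-(d/2)) := by
    rw [← Real.exp_add]; ring_nf
  have h2 : Real.exp (d/2) = (Real.exp (-(d/2)))⁻¹ := by
    rw [← Real.exp_neg]; ring_nf
  have h3 : (0:ℝ) < Real.exp (-(d/2)) := Real.exp_pos _
  have h4 : Real.exp (-(d/2)) ≠ 0 := ne_of_gt h3
  have h5 : 1 + Real.exp (-(d/2)) * Real.exp (-(d/2)) ≠ 0 := by positivity
  rw [h1, h2]
  field_simp

theorem stmt3 (k : ℕ) (hk : 1 ≤ k) (q : ℝ) (hq : 0 < q) (x : ℕ → ℝ)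
    (hx : ∀ r, r + 1 < k → x r < x (r + 1))
    (Z : Matrix (Fin k) (Fin k) ℝ)
    (hZ : ∀ i j : Fin k, Z i j = Real.exp (-(q * |x i - x j|))) :
    IsUnit Z ∧
      ∑ i, ∑ j, Z⁻¹ i j
        = 1 + ∑ r ∈ Finset.range (k - 1), Real.tanh (q * (x (r + 1) - x r) / 2) := by
  -- monotonicity on indices < k
  have hmono : ∀ a b : ℕ, a ≤ b → b < k → x a ≤ x b := by
    intro a b hab hb
    induction b, hab using Nat.le_induction with
    | base => exact le_rfl
    | succ n hn ih => exact le_trans (ih (by omega)) (le_of_lt (hx n (by omega)))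
  set t : ℕ → ℝ := fun r => Real.exp (-(q * (x (r+1) - x r))) with ht
  have ht_pos : ∀ r, 0 < t r := fun r => Real.exp_pos _
  have ht_lt : ∀ r, r + 1 < k → t r < 1 := by
    intro r hr
    have hd := hx r hr
    have : -(q * (x (r+1) - x r)) < 0 := by nlinarith
    simpa [ht] using Real.exp_lt_one_iff.mpr this
  have ht_sq : ∀ r, r + 1 < k → (0:ℝ) < 1 - (t r)^2 := by
    intro r hr
    have h1 := ht_pos r
    have h2 := ht_lt r hr
    nlinarith
  have hZle : ∀ i j : Fin k, (i:ℕ) ≤ (j:ℕ) → Z i j = Real.exp (-(q * (x j - x i))) := by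
    intro i j hij
    rw [hZ]
    congr 2
    rw [abs_sub_comm, abs_of_nonneg (sub_nonneg.mpr (hmono i j hij j.isLt))]
  have hZge : ∀ i j : Fin k, (j:ℕ) ≤ (i:ℕ) → Z i j = Real.exp (-(q * (x i - x j))) := by
    intro i j hij
    rw [hZ]
    congr 2
    rw [abs_of_nonneg (sub_nonneg.mpr (hmono j i hij i.isLt))]
  -- recurrences
  have hrecL : ∀ (i : Fin k) (r : ℕ) (hr : r+1 < k), (i:ℕ) ≤ r →
      Z i ⟨r+1, hr⟩ = Z i ⟨r, by omega⟩ * t r := by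
    intro i r hr hir
    rw [hZle i ⟨r+1, hr⟩ (by simpa using by omega), hZle i ⟨r, by omega⟩ (by simpa using hir),
      ht, ← Real.exp_add]
    congr 1
    simp only
    ring
  have hrecR : ∀ (i : Fin k) (r : ℕ) (hr : r+1 < k), r+1 ≤ (i:ℕ) →
      Z i ⟨r, by omega⟩ = Z i ⟨r+1, hr⟩ * t r := by
    intro i r hr hir
    rw [hZge i ⟨r, by omega⟩ (by simpa using by omega), hZge i ⟨r+1, hr⟩ (by simpa using hir),
      ht, ← Real.exp_add]
    congr 1
    simp only
    ring
  set c : ℕ → ℝ := fun r => t r / (1 - (t r)^2) with hc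
  set B : ℕ → Matrix (Fin k) (Fin k) ℝ := fun r => Matrix.of fun j l =>
    if (j:ℕ) = r ∧ (l:ℕ) = r then c r * t r
    else if (j:ℕ) = r ∧ (l:ℕ) = r+1 then -(c r)
    else if (j:ℕ) = r+1 ∧ (l:ℕ) = r then -(c r)
    else if (j:ℕ) = r+1 ∧ (l:ℕ) = r+1 then c r * t r
    else 0 with hB
  set W : Matrix (Fin k) (Fin k) ℝ := 1 + ∑ r ∈ Finset.range (k-1), B r with hW
  -- key: column sums against Z
  have hBsum : ∀ (r : ℕ), r + 1 < k → ∀ i l : Fin k,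
      ∑ j, Z i j * B r j l =
        if ((l:ℕ) = r+1 ∧ (i:ℕ) ≤ r) ∨ ((l:ℕ) = r ∧ r+1 ≤ (i:ℕ)) then -Z i l else 0 := by
    intro r hr i l
    set a : Fin k := ⟨r, by omega⟩ with ha
    set b : Fin k := ⟨r+1, hr⟩ with hb
    have hab : a ≠ b := by simp [ha, hb, Fin.ext_iff]
    have hsum : ∑ j, Z i j * B r j l = Z i a * B r a l + Z i b * B r b l := by
      apply sum_eq_pair
      · exact hab
      · intro j hja hjb
        have h1 : (j:ℕ) ≠ r := fun h => hja (Fin.ext (by simpa [ha] using h))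
        have h2 : (j:ℕ) ≠ r+1 := fun h => hjb (Fin.ext (by simpa [hb] using h))
        simp [hB, h1, h2]
    rw [hsum]
    have hca : (a:ℕ) = r := rfl
    have hcb : (b:ℕ) = r+1 := rfl
    rcases Nat.lt_trichotomy (l:ℕ) r with hl | hl | hl
    · -- l ≠ r, r+1
      have h1 : (l:ℕ) ≠ r := by omega
      have h2 : (l:ℕ) ≠ r+1 := by omega
      simp [hB, h1, h2, hca, hcb]
    · -- l = r, i.e. l = a
      have hla : l = a := Fin.ext (by simp [ha, hl])
      have hBa : B r a l = c r * t r := by simp [hB, hca, hl]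
      have hBb : B r b l = -(c r) := by simp [hB, hcb, hl]
      rw [hBa, hBb]
      rcases le_or_gt (i:ℕ) r with hi | hi
      · have hzb : Z i b = Z i a * t r := hrecL i r hr hi
        have : ¬ (((l:ℕ) = r+1 ∧ (i:ℕ) ≤ r) ∨ ((l:ℕ) = r ∧ r+1 ≤ (i:ℕ))) := by omega
        rw [if_neg this, hzb]
        ring
      · have hza : Z i a = Z i b * t r := hrecR i r hr hi
        have hcnd : (((l:ℕ) = r+1 ∧ (i:ℕ) ≤ r) ∨ ((l:ℕ) = r ∧ r+1 ≤ (i:ℕ))) := by omega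
        rw [if_pos hcnd, hla, hza]
        have hne := ne_of_gt (ht_sq r hr)
        simp only [hc]
        field_simp
        ring
    · rcases Nat.lt_or_ge (l:ℕ) (r+2) with hl2 | hl2
      · -- l = r+1, i.e. l = b
        have hlr : (l:ℕ) = r+1 := by omega
        have hlb : l = b := Fin.ext (by simp [hb, hlr])
        have hBa : B r a l = -(c r) := by simp [hB, hca, hlr]
        have hBb : B r b l = c r * t r := by simp [hB, hcb, hlr]
        rw [hBa, hBb]
        rcases le_or_gt (i:ℕ) r with hi | hi
        · have hzb : Z i b = Z i a * t r := hrecL i r hr hi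
          have hcnd : (((l:ℕ) = r+1 ∧ (i:ℕ) ≤ r) ∨ ((l:ℕ) = r ∧ r+1 ≤ (i:ℕ))) := by omega
          rw [if_pos hcnd, hlb, hzb]
          have hne := ne_of_gt (ht_sq r hr)
          simp only [hc]
          field_simp
          ring
        · have hza : Z i a = Z i b * t r := hrecR i r hr hi
          have : ¬ (((l:ℕ) = r+1 ∧ (i:ℕ) ≤ r) ∨ ((l:ℕ) = r ∧ r+1 ≤ (i:ℕ))) := by omega
          rw [if_neg this, hza]
          ring
      · have h1 : (l:ℕ) ≠ r := by omega
        have h2 : (l:ℕ) ≠ r+1 := by omega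
        simp [hB, h1, h2, hca, hcb]
  -- Z * W = 1
  have hZW : Z * W = 1 := by
    ext i l
    rw [Matrix.mul_apply]
    have expand : ∀ j : Fin k, Z i j * W j l =
        Z i j * (1 : Matrix (Fin k) (Fin k) ℝ) j l + ∑ r ∈ Finset.range (k-1), Z i j * B r j l := by
      intro j
      rw [hW]
      simp [Matrix.add_apply, Matrix.sum_apply, mul_add, Finset.mul_sum]
    rw [Finset.sum_congr rfl (fun j _ => expand j), Finset.sum_add_distrib]
    rw [Finset.sum_comm]
    have h1 : ∑ j, Z i j * (1 : Matrix (Fin k) (Fin k) ℝ) j l = Z i l := by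
      simp [Matrix.one_apply, Finset.sum_ite_eq']
    rw [h1]
    have h2 : ∀ r ∈ Finset.range (k-1), ∑ j, Z i j * B r j l =
        if ((l:ℕ) = r+1 ∧ (i:ℕ) ≤ r) ∨ ((l:ℕ) = r ∧ r+1 ≤ (i:ℕ)) then -Z i l else 0 := by
      intro r hrr
      exact hBsum r (by have := Finset.mem_range.mp hrr; omega) i l
    rw [Finset.sum_congr rfl h2]
    rcases Nat.lt_trichotomy (i:ℕ) (l:ℕ) with hil | hil | hil
    · have hil' : i ≠ l := fun h => by simp [h] at hil
      have : ∀ r ∈ Finset.range (k-1),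
          (if ((l:ℕ) = r+1 ∧ (i:ℕ) ≤ r) ∨ ((l:ℕ) = r ∧ r+1 ≤ (i:ℕ)) then -Z i l else 0)
          = if r = (l:ℕ) - 1 then -Z i l else 0 := by
        intro r _
        congr 1
        · simp only [eq_iff_iff]; omega
      rw [Finset.sum_congr rfl this, Finset.sum_ite_eq' (Finset.range (k-1)) ((l:ℕ)-1)]
      have hmem : (l:ℕ) - 1 ∈ Finset.range (k-1) := by
        have := l.isLt; simp only [Finset.mem_range]; omega
      rw [if_pos hmem, Matrix.one_apply_ne hil']
      ring
    · have hil' : i = l := Fin.ext hil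
      have : ∀ r ∈ Finset.range (k-1),
          (if ((l:ℕ) = r+1 ∧ (i:ℕ) ≤ r) ∨ ((l:ℕ) = r ∧ r+1 ≤ (i:ℕ)) then -Z i l else 0) = 0 := by
        intro r _
        rw [if_neg]
        omega
      rw [Finset.sum_congr rfl this, Finset.sum_const_zero, add_zero, hil',
        Matrix.one_apply_eq, hZle l l le_rfl]
      simp
    · have hil' : i ≠ l := fun h => by simp [h] at hil
      have : ∀ r ∈ Finset.range (k-1),
          (if ((l:ℕ) = r+1 ∧ (i:ℕ) ≤ r) ∨ ((l:ℕ) = r ∧ r+1 ≤ (i:ℕ)) then -Z i l else 0)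
          = if r = (l:ℕ) then -Z i l else 0 := by
        intro r _
        congr 1
        · simp only [eq_iff_iff]; omega
      rw [Finset.sum_congr rfl this, Finset.sum_ite_eq' (Finset.range (k-1)) ((l:ℕ))]
      have hmem : (l:ℕ) ∈ Finset.range (k-1) := by
        have := i.isLt; simp only [Finset.mem_range]; omega
      rw [if_pos hmem, Matrix.one_apply_ne hil']
      ring
  have hunit : IsUnit Z :=
    (Matrix.isUnit_iff_isUnit_det Z).mpr (Matrix.isUnit_det_of_right_inverse hZW)
  refine ⟨hunit, ?_⟩
  rw [Matrix.inv_eq_right_inv hZW]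
  -- sum of entries of W
  have hsum1 : ∑ i : Fin k, ∑ j : Fin k, (1 : Matrix (Fin k) (Fin k) ℝ) i j = k := by
    simp [Matrix.one_apply, Finset.sum_ite_eq']
  have hsumB : ∀ r : ℕ, r + 1 < k → ∑ i : Fin k, ∑ j : Fin k, B r i j = 2 * c r * (t r - 1) := by
    intro r hr
    set a : Fin k := ⟨r, by omega⟩ with ha
    set b : Fin k := ⟨r+1, hr⟩ with hb
    have hab : a ≠ b := by simp [ha, hb, Fin.ext_iff]
    have hrow : ∀ i : Fin k, ∑ j : Fin k, B r i j =
        if (i:ℕ) = r ∨ (i:ℕ) = r+1 then c r * t r - c r else 0 := by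
      intro i
      have hsum : ∑ j : Fin k, B r i j = B r i a + B r i b := by
        apply sum_eq_pair
        · exact hab
        · intro j hja hjb
          have h1 : (j:ℕ) ≠ r := fun h => hja (Fin.ext (by simpa [ha] using h))
          have h2 : (j:ℕ) ≠ r+1 := fun h => hjb (Fin.ext (by simpa [hb] using h))
          simp [hB, h1, h2]
      rw [hsum]
      rcases eq_or_ne (i:ℕ) r with hi | hi
      · rw [if_pos (Or.inl hi)]
        simp [hB, hi, ha, hb]
        ring
      · rcases eq_or_ne (i:ℕ) (r+1) with hi2 | hi2
        · rw [if_pos (Or.inr hi2)]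
          simp [hB, hi, hi2, ha, hb]
          ring
        · rw [if_neg (by omega)]
          simp [hB, hi, hi2, ha, hb]
    have h0 : ∀ j : Fin k, j ≠ a → j ≠ b →
        (if (j:ℕ) = r ∨ (j:ℕ) = r+1 then c r * t r - c r else 0) = 0 := by
      intro j hja hjb
      have h1 : (j:ℕ) ≠ r := fun h => hja (Fin.ext (by simpa [ha] using h))
      have h2 : (j:ℕ) ≠ r+1 := fun h => hjb (Fin.ext (by simpa [hb] using h))
      rw [if_neg (by omega)]
    rw [Finset.sum_congr rfl (fun i _ => hrow i), sum_eq_pair _ a b hab h0,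
      if_pos (Or.inl (rfl : ((a : Fin k) : ℕ) = r)),
      if_pos (Or.inr (rfl : ((b : Fin k) : ℕ) = r+1))]
    ring
  have htanh : ∀ r : ℕ, r + 1 < k →
      1 + 2 * c r * (t r - 1) = Real.tanh (q * (x (r + 1) - x r) / 2) := by
    intro r hr
    have h1 := ht_pos r
    have hne : (1 : ℝ) - (t r)^2 ≠ 0 := ne_of_gt (ht_sq r hr)
    have hne1 : (1 : ℝ) + t r ≠ 0 := by positivity
    rw [tanh_half (q * (x (r + 1) - x r))]
    show 1 + 2 * c r * (t r - 1) = (1 - t r) / (1 + t r)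
    rw [hc]
    field_simp
    ring
  have hswap : ∑ i : Fin k, ∑ j : Fin k, ∑ r ∈ Finset.range (k-1), B r i j
      = ∑ r ∈ Finset.range (k-1), ∑ i : Fin k, ∑ j : Fin k, B r i j := by
    rw [Finset.sum_congr rfl (fun i _ => Finset.sum_comm), Finset.sum_comm]
  calc ∑ i, ∑ j, W i j
      = (k : ℝ) + ∑ r ∈ Finset.range (k-1), (2 * c r * (t r - 1)) := by
        rw [hW]
        simp only [Matrix.add_apply, Matrix.sum_apply, Finset.sum_add_distrib]
        rw [hsum1, hswap]
        congr 1
        exact Finset.sum_congr rfl (fun r hr =>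
          hsumB r (by have := Finset.mem_range.mp hr; omega))
    _ = 1 + ∑ r ∈ Finset.range (k - 1), Real.tanh (q * (x (r + 1) - x r) / 2) := by
        have hkcast : (k : ℝ) = 1 + ∑ _r ∈ Finset.range (k-1), (1:ℝ) := by
          rw [Finset.sum_const, Finset.card_range, nsmul_eq_mul, mul_one, Nat.cast_sub hk]
          push_cast
          ring
        rw [hkcast, add_assoc, ← Finset.sum_add_distrib]
        congr 1
        exact Finset.sum_congr rfl (fun r hr =>
          htanh r (by have := Finset.mem_range.mp hr; omega))
end

section
/- Let x_1 < ... < x_k with k ≥ 2 and q > 0, and let Z_{ij} = e^{-q|x_i - x_j|}. If w solves Zw = 1, then w_1 = 1/(1 + e^{-q(x_2 - x_1)}). -/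
/-! Subtracting `e := exp (-q (x₂ - x₁))` times the second row of `Z w = 1` from the first
leaves only the `w₁` term: since `x₁ < x₂ ≤ xⱼ` for `j ≥ 2`, the kernel factorises as
`Z₁ⱼ = e Z₂ⱼ`. Hence `(1 - e²) w₁ = 1 - e`, and `e ≠ 1` gives `w₁ = 1 / (1 + e)`. -/

open Real Finset

theorem Matrix.sub_mul_apply_mul_eq_of_mulVec_eq_one {R ι : Type*} [CommRing R] [Fintype ι]
    {Z : Matrix ι ι R} {w : ι → R} (hw : Z.mulVec w = fun _ => 1) {i₀ i₁ : ι} {c : R}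
    (hrow : ∀ j ≠ i₀, Z i₀ j = c * Z i₁ j) :
    (Z i₀ i₀ - c * Z i₁ i₀) * w i₀ = 1 - c := by
  have hcomb : ∑ j, (Z i₀ j - c * Z i₁ j) * w j = 1 - c := by
    have h₀ := congrFun hw i₀
    have h₁ := congrFun hw i₁
    simp only [Matrix.mulVec, dotProduct] at h₀ h₁
    simp only [sub_mul, sum_sub_distrib, mul_assoc, ← mul_sum, h₀, h₁, mul_one]
  rwa [sum_eq_single i₀ (fun j _ hj => by rw [hrow j hj, sub_self, zero_mul])
    (fun h => absurd (mem_univ i₀) h)] at hcomb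

theorem exp_neg_mul_abs_sub_of_le_of_le (q : ℝ) {a b c : ℝ} (hab : a ≤ b) (hbc : b ≤ c) :
    exp (-(q * |a - c|)) = exp (-(q * (b - a))) * exp (-(q * |b - c|)) := by
  rw [abs_of_nonpos (by linarith), abs_of_nonpos (by linarith), ← exp_add]
  ring_nf

theorem eq_one_div_one_add_of_one_sub_mul_self_mul {e w : ℝ} (he : e ≠ 1) (he₀ : 0 ≤ e)
    (h : (1 - e * e) * w = 1 - e) : w = 1 / (1 + e) := by
  have hsub : 1 - e ≠ 0 := sub_ne_zero.mpr he.symm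
  have hfactor : (1 - e) * ((1 + e) * w - 1) = 0 := by linear_combination h
  rw [eq_div_iff (by positivity)]
  linear_combination (mul_eq_zero.mp hfactor).resolve_left hsub

theorem exp_kernel_weight_eq_of_mulVec_eq_one {ι : Type*} [Fintype ι] {q : ℝ} (hq : q ≠ 0)
    {y : ι → ℝ} {i₀ i₁ : ι} (hy : y i₀ < y i₁) (hy₁ : ∀ j ≠ i₀, y i₁ ≤ y j)
    {Z : Matrix ι ι ℝ} (hZ : ∀ i j, Z i j = exp (-(q * |y i - y j|)))
    {w : ι → ℝ} (hw : Z.mulVec w = fun _ => 1) :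
    w i₀ = 1 / (1 + exp (-(q * (y i₁ - y i₀)))) := by
  set e := exp (-(q * (y i₁ - y i₀)))
  have hrow : ∀ j ≠ i₀, Z i₀ j = e * Z i₁ j := fun j hj => by
    rw [hZ, hZ, exp_neg_mul_abs_sub_of_le_of_le q hy.le (hy₁ j hj)]
  have hdiag : Z i₀ i₀ - e * Z i₁ i₀ = 1 - e * e := by
    rw [hZ, hZ, sub_self, abs_zero, abs_of_pos (sub_pos.mpr hy)]
    simp [e]
  have he : e ≠ 1 := by
    rw [Ne, exp_eq_one_iff, neg_eq_zero]
    exact mul_ne_zero hq (sub_ne_zero.mpr hy.ne')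
  apply eq_one_div_one_add_of_one_sub_mul_self_mul he (exp_pos _).le
  rw [← hdiag]
  exact Matrix.sub_mul_apply_mul_eq_of_mulVec_eq_one hw hrow

theorem stmt4 (k : ℕ) (hk : 2 ≤ k) (q : ℝ) (hq : 0 < q) (x : ℕ → ℝ)
    (hx : ∀ r, r + 1 < k → x r < x (r + 1))
    (Z : Matrix (Fin k) (Fin k) ℝ)
    (hZ : ∀ i j : Fin k, Z i j = Real.exp (-(q * |x i - x j|)))
    (w : Fin k → ℝ) (hw : Z.mulVec w = fun _ => 1) :
    w ⟨0, by omega⟩ = 1 / (1 + Real.exp (-(q * (x 1 - x 0)))) := by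
  have hmono : StrictMonoOn x (Set.Iic (k - 1)) :=
    strictMonoOn_Iic_of_lt_succ fun m hm => hx m (by omega)
  have hx₁ : ∀ j : Fin k, j ≠ ⟨0, by omega⟩ → x 1 ≤ x j := fun j hj => by
    have hj : j.val ≠ 0 := fun h => hj (Fin.ext h)
    exact hmono.monotoneOn (Set.mem_Iic.mpr (by omega)) (Set.mem_Iic.mpr (by omega)) (by omega)
  exact exp_kernel_weight_eq_of_mulVec_eq_one (i₁ := ⟨1, by omega⟩) hq.ne' (hx 0 (by omega))
    hx₁ hZ hw
end

section
/- Let x_1 < ... < x_k with q > 0 and Z_{ij} = e^{-q|x_i - x_j|}. If w solves Zw = 1, then for every interior index i (2 ≤ i ≤ k-1), w_i + Σ_{j>i} Z_{ij} w_j = 1/(1 + a_{i-1}), where a_{i-1} = e^{-q(x_i - x_{i-1})}. -/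
theorem stmt5 (k : ℕ) (q : ℝ) (hq : 0 < q) (x : ℕ → ℝ)
    (hx : ∀ r, r + 1 < k → x r < x (r + 1))
    (Z : Matrix (Fin k) (Fin k) ℝ)
    (hZ : ∀ i j : Fin k, Z i j = Real.exp (-(q * |x i - x j|)))
    (w : Fin k → ℝ) (hw : Z.mulVec w = fun _ => 1) :
    ∀ i : Fin k, 0 < (i : ℕ) → (i : ℕ) < k - 1 →
      w i + ∑ j ∈ Finset.univ.filter (fun j : Fin k => i < j), Z i j * w j
        = 1 / (1 + Real.exp (-(q * (x i - x ((i : ℕ) - 1))))) := by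
  -- monotonicity of x on [0, k)
  have hmono : ∀ n, n < k → ∀ m, m < n → x m < x n := by
    intro n hn
    induction n with
    | zero => intro m hm; omega
    | succ n ih =>
      intro m hm
      have hstep : x n < x (n + 1) := hx n hn
      rcases Nat.lt_or_ge m n with h | h
      · exact lt_trans (ih (by omega) m h) hstep
      · have : m = n := by omega
        subst this; exact hstep
  have hxlt : ∀ m n : Fin k, m < n → x ↑m < x ↑n := by
    intro m n hmn; exact hmono n n.isLt m hmn
  have hxle : ∀ m n : Fin k, m ≤ n → x ↑m ≤ x ↑n := by
    intro m n hmn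
    rcases lt_or_eq_of_le hmn with h | h
    · exact le_of_lt (hxlt m n h)
    · rw [h]
  intro i hi0 hik
  have hk : (i : ℕ) < k := i.isLt
  set i' : Fin k := ⟨(i : ℕ) - 1, by omega⟩ with hi'def
  have hi' : (i' : ℕ) = (i : ℕ) - 1 := rfl
  have hi'lt : i' < i := by
    rw [Fin.lt_def, hi']; omega
  set a : ℝ := Real.exp (-(q * (x ↑i - x ↑i'))) with ha
  -- key factorizations
  have h1 : ∀ j : Fin k, j ≤ i' → Z i j = a * Z i' j := by
    intro j hj
    rw [hZ, hZ, ha]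
    have hji : x ↑j ≤ x ↑i' := hxle j i' hj
    have hii : x ↑i' < x ↑i := hxlt i' i hi'lt
    rw [abs_of_nonneg (by linarith), abs_of_nonneg (by linarith), ← Real.exp_add]
    congr 1; ring
  have h2 : ∀ j : Fin k, i ≤ j → Z i' j = a * Z i j := by
    intro j hj
    rw [hZ, hZ, ha]
    have hji : x ↑i ≤ x ↑j := hxle i j hj
    have hii : x ↑i' < x ↑i := hxlt i' i hi'lt
    rw [abs_of_nonpos (by linarith), abs_of_nonpos (by linarith), ← Real.exp_add]
    congr 1; ring
  have hZdiag : ∀ r : Fin k, Z r r = 1 := by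
    intro r; rw [hZ]; simp
  have row : ∀ r : Fin k, ∑ j, Z r j * w j = 1 := by
    intro r
    have := congrFun hw r
    simpa [Matrix.mulVec, dotProduct] using this
  -- set decompositions
  have S1 : Finset.univ.filter (fun j : Fin k => ¬ j < i)
      = insert i (Finset.univ.filter (fun j : Fin k => i < j)) := by
    ext j
    simp only [Finset.mem_filter, Finset.mem_univ, true_and, Finset.mem_insert,
      not_lt, Fin.le_def, Fin.lt_def, Fin.ext_iff]
    omega
  have S2 : Finset.univ.filter (fun j : Fin k => j < i)
      = insert i' (Finset.univ.filter (fun j : Fin k => j < i')) := by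
    ext j
    simp only [Finset.mem_filter, Finset.mem_univ, true_and, Finset.mem_insert,
      Fin.lt_def, Fin.ext_iff, hi']
    omega
  have S3 : Finset.univ.filter (fun j : Fin k => ¬ j < i')
      = insert i' (insert i (Finset.univ.filter (fun j : Fin k => i < j))) := by
    ext j
    simp only [Finset.mem_filter, Finset.mem_univ, true_and, Finset.mem_insert,
      not_lt, Fin.le_def, Fin.lt_def, Fin.ext_iff, hi']
    omega
  have hnotmem : i ∉ Finset.univ.filter (fun j : Fin k => i < j) := by simp
  have hnotmem2 : i' ∉ Finset.univ.filter (fun j : Fin k => j < i') := by simp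
  have hnotmem3 : i' ∉ insert i (Finset.univ.filter (fun j : Fin k => i < j)) := by
    simp only [Finset.mem_insert, Finset.mem_filter, Finset.mem_univ, true_and]
    push_neg
    exact ⟨Fin.ne_of_lt hi'lt, le_of_lt hi'lt⟩
  set u : ℝ := w i + ∑ j ∈ Finset.univ.filter (fun j : Fin k => i < j), Z i j * w j with hu
  set v : ℝ := w i' + ∑ j ∈ Finset.univ.filter (fun j : Fin k => j < i'), Z i' j * w j with hv
  -- Row i : u + a * v = 1
  have eq1 : u + a * v = 1 := by
    have hr := row i
    rw [← Finset.sum_filter_add_sum_filter_not Finset.univ (fun j : Fin k => j < i)] at hr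
    rw [S1, Finset.sum_insert hnotmem, hZdiag, one_mul, S2,
      Finset.sum_insert hnotmem2] at hr
    have e1 : Z i i' = a := by
      rw [h1 i' le_rfl, hZdiag, mul_one]
    have e2 : ∑ j ∈ Finset.univ.filter (fun j : Fin k => j < i'), Z i j * w j
        = a * ∑ j ∈ Finset.univ.filter (fun j : Fin k => j < i'), Z i' j * w j := by
      rw [Finset.mul_sum]
      refine Finset.sum_congr rfl fun j hj => ?_
      have : j < i' := (Finset.mem_filter.mp hj).2
      rw [h1 j (le_of_lt this)]; ring
    rw [e1, e2] at hr
    rw [hu, hv]; ring_nf; ring_nf at hr; linarith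
  -- Row i' : v + a * u = 1
  have eq2 : v + a * u = 1 := by
    have hr := row i'
    rw [← Finset.sum_filter_add_sum_filter_not Finset.univ (fun j : Fin k => j < i')] at hr
    rw [S3, Finset.sum_insert hnotmem3, Finset.sum_insert hnotmem, hZdiag, one_mul] at hr
    have e1 : Z i' i = a := by
      rw [h2 i le_rfl, hZdiag, mul_one]
    have e2 : ∑ j ∈ Finset.univ.filter (fun j : Fin k => i < j), Z i' j * w j
        = a * ∑ j ∈ Finset.univ.filter (fun j : Fin k => i < j), Z i j * w j := by
      rw [Finset.mul_sum]
      refine Finset.sum_congr rfl fun j hj => ?_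
      have : i < j := (Finset.mem_filter.mp hj).2
      rw [h2 j (le_of_lt this)]; ring
    rw [e1, e2] at hr
    rw [hu, hv]; ring_nf; ring_nf at hr; linarith
  have hapos : 0 < a := Real.exp_pos _
  have halt1 : a < 1 := by
    have hlt : x ↑i' < x ↑i := hxlt i' i hi'lt
    rw [ha]
    have hneg : -(q * (x ↑i - x ↑i')) < 0 := by nlinarith
    calc Real.exp (-(q * (x ↑i - x ↑i'))) < Real.exp 0 := Real.exp_lt_exp.mpr hneg
      _ = 1 := Real.exp_zero
  have huv : u = v := by
    have h0 : (1 - a) * (u - v) = 0 := by linear_combination eq1 - eq2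
    have : u - v = 0 := by
      rcases mul_eq_zero.mp h0 with h | h
      · exfalso; linarith
      · exact h
    linarith
  have hfin : u * (1 + a) = 1 := by
    rw [huv] at eq1 ⊢
    linarith [eq1]
  have h1a : (0:ℝ) < 1 + a := by linarith
  have : u = 1 / (1 + a) := by
    field_simp at hfin ⊢
    linarith
  rw [hu] at this
  convert this using 4
end

section
/- Let x_1 < ... < x_k with q > 0 and Z_{ij} = e^{-q|x_i - x_j|}. If w solves Zw = 1, then for every interior index i (2 ≤ i ≤ k-1), Σ_{j<i} Z_{ji} w_j + w_i = 1/(1 + a_i), where a_i = e^{-q(x_{i+1} - x_i)}. -/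
theorem stmt6 (k : ℕ) (q : ℝ) (hq : 0 < q) (x : ℕ → ℝ)
    (hx : ∀ r, r + 1 < k → x r < x (r + 1))
    (Z : Matrix (Fin k) (Fin k) ℝ)
    (hZ : ∀ i j : Fin k, Z i j = Real.exp (-(q * |x i - x j|)))
    (w : Fin k → ℝ) (hw : Z.mulVec w = fun _ => 1) :
    ∀ i : Fin k, 0 < (i : ℕ) → (i : ℕ) < k - 1 →
      (∑ j ∈ Finset.univ.filter (fun j : Fin k => j < i), Z j i * w j) + w i
        = 1 / (1 + Real.exp (-(q * (x ((i : ℕ) + 1) - x i)))) := by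
  intro i hi0 hik
  have hik' : (i : ℕ) + 1 < k := by omega
  set i' : Fin k := ⟨(i : ℕ) + 1, hik'⟩ with hi'def
  -- monotonicity of x on [0, k)
  have hxmono : ∀ n, n < k → ∀ m, m ≤ n → x m ≤ x n := by
    intro n
    induction n with
    | zero => intro _ m hm; rw [Nat.le_zero.mp hm]
    | succ n ih =>
      intro hn m hm
      rcases Nat.lt_or_ge m (n + 1) with h | h
      · exact (ih (by omega) m (by omega)).trans (le_of_lt (hx n hn))
      · have : m = n + 1 := by omega
        rw [this]
  have hxi : x (i : ℕ) < x ((i : ℕ) + 1) := hx (i : ℕ) hik'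
  set a := Real.exp (-(q * (x ((i : ℕ) + 1) - x (i : ℕ)))) with ha
  have ha0 : 0 < a := Real.exp_pos _
  have ha1 : a < 1 := by
    rw [ha]
    apply Real.exp_lt_one_iff.mpr  -- may not exist; adjust
    nlinarith
  have hxi' : x (i' : ℕ) = x ((i : ℕ) + 1) := rfl
  -- key pointwise identities
  have keyA : ∀ j : Fin k, j ≤ i → Z i' j = a * Z i j := by
    intro j hj
    have hxj : x (j : ℕ) ≤ x (i : ℕ) := hxmono (i : ℕ) i.isLt (j : ℕ) hj
    rw [hZ, hZ, ha, ← Real.exp_add]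
    congr 1
    rw [abs_of_nonneg (by simp only [hxi']; linarith),
        abs_of_nonneg (by linarith)]
    simp only [hxi']
    ring
  have keyB : ∀ j : Fin k, i' ≤ j → Z i j = a * Z i' j := by
    intro j hj
    have hxj : x (i' : ℕ) ≤ x (j : ℕ) := hxmono (j : ℕ) j.isLt (i' : ℕ) hj
    rw [hZ, hZ, ha, ← Real.exp_add]
    congr 1
    rw [abs_sub_comm (x (i : ℕ)), abs_of_nonneg (by simp only [hxi'] at hxj ⊢; linarith),
        abs_sub_comm (x (i' : ℕ)), abs_of_nonneg (by linarith)]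
    simp only [hxi']
    ring
  have hZii : Z i' i' = 1 := by rw [hZ]; simp
  -- row equations
  have h1 : (∑ j, Z i j * w j) = 1 := by
    have := congrFun hw i
    simpa [Matrix.mulVec, dotProduct] using this
  have h2 : (∑ j, Z i' j * w j) = 1 := by
    have := congrFun hw i'
    simpa [Matrix.mulVec, dotProduct] using this
  set S := ∑ j ∈ Finset.univ.filter (fun j : Fin k => j ≤ i), Z i j * w j with hS
  set T := ∑ j ∈ Finset.univ.filter (fun j : Fin k => ¬ j ≤ i), Z i j * w j with hT
  set S' := ∑ j ∈ Finset.univ.filter (fun j : Fin k => j ≤ i'), Z i' j * w j with hS'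
  set T' := ∑ j ∈ Finset.univ.filter (fun j : Fin k => ¬ j ≤ i'), Z i' j * w j with hT'
  have hST : S + T = 1 := by
    rw [hS, hT, Finset.sum_filter_add_sum_filter_not]; exact h1
  have hST' : S' + T' = 1 := by
    rw [hS', hT', Finset.sum_filter_add_sum_filter_not]; exact h2
  have hfilt1 : Finset.univ.filter (fun j : Fin k => j ≤ i')
      = insert i' (Finset.univ.filter (fun j : Fin k => j ≤ i)) := by
    ext j
    simp only [Finset.mem_insert, Finset.mem_filter, Finset.mem_univ, true_and,
      Fin.le_def, Fin.ext_iff]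
    have hi'v : (i' : ℕ) = (i : ℕ) + 1 := rfl
    omega
  have hnotmem1 : i' ∉ Finset.univ.filter (fun j : Fin k => j ≤ i) := by
    intro h
    have := (Finset.mem_filter.mp h).2
    rw [Fin.le_def] at this
    have h2 : (i : ℕ) + 1 ≤ (i : ℕ) := this
    omega
  have rel1 : S' = a * S + w i' := by
    rw [hS', hfilt1, Finset.sum_insert hnotmem1, hZii, one_mul, hS, Finset.mul_sum]
    rw [add_comm]
    congr 1
    apply Finset.sum_congr rfl
    intro j hj
    rw [keyA j (Finset.mem_filter.mp hj).2, mul_assoc]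
  have hfilt2 : Finset.univ.filter (fun j : Fin k => ¬ j ≤ i)
      = insert i' (Finset.univ.filter (fun j : Fin k => ¬ j ≤ i')) := by
    ext j
    simp only [Finset.mem_insert, Finset.mem_filter, Finset.mem_univ, true_and,
      Fin.le_def, Fin.ext_iff, not_le]
    have hi'v : (i' : ℕ) = (i : ℕ) + 1 := rfl
    omega
  have hnotmem2 : i' ∉ Finset.univ.filter (fun j : Fin k => ¬ j ≤ i') := by
    intro h
    exact (Finset.mem_filter.mp h).2 le_rfl
  have rel2 : T = a * (w i' + T') := by
    rw [hT, hfilt2, Finset.sum_insert hnotmem2, hT', mul_add, Finset.mul_sum]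
    congr 1
    · rw [keyB i' le_rfl, hZii]; ring
    · apply Finset.sum_congr rfl
      intro j hj
      have hj' : i' ≤ j := le_of_lt (not_le.mp (Finset.mem_filter.mp hj).2)
      rw [keyB j hj', mul_assoc]
  -- derive S * (1 + a) = 1
  have hSval : S * (1 + a) = 1 := by nlinarith [hST, hST', rel1, rel2]
  -- relate goal LHS to S
  have hfilt3 : Finset.univ.filter (fun j : Fin k => j ≤ i)
      = insert i (Finset.univ.filter (fun j : Fin k => j < i)) := by
    ext j
    simp only [Finset.mem_insert, Finset.mem_filter, Finset.mem_univ, true_and,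
      Fin.le_def, Fin.lt_def, Fin.ext_iff]
    omega
  have hnotmem3 : i ∉ Finset.univ.filter (fun j : Fin k => j < i) := by
    intro h
    exact lt_irrefl i (Finset.mem_filter.mp h).2
  have hZii2 : Z i i = 1 := by rw [hZ]; simp
  have hLHS : (∑ j ∈ Finset.univ.filter (fun j : Fin k => j < i), Z j i * w j) + w i = S := by
    rw [hS, hfilt3, Finset.sum_insert hnotmem3, hZii2, one_mul, add_comm]
    congr 1
    apply Finset.sum_congr rfl
    intro j _
    rw [hZ, hZ, abs_sub_comm]
  rw [hLHS]
  have h1a : (0:ℝ) < 1 + a := by linarith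
  field_simp
  linarith [hSval]
end

section
/- Let y_1 < ... < y_n be reals and k ≥ 2. Define B(1,j) = +∞ and B(m,j) = max_{1 ≤ i < j} min(B(m-1,i), y_j - y_i) for m ≥ 2. Then max_{1 ≤ j ≤ n} B(k,j) equals the maximum over all k-element index subsets I = {i_1 < ... < i_k} of min_{1 ≤ r < s ≤ k} (y_{i_s} - y_{i_r}). -/
/-- Bottleneck Bellman value function for max–min subset selection. -/
noncomputable def bottleneckB (y : ℕ → ℝ) : ℕ → ℕ → EReal
  | 0, _ => ⊤
  | 1, _ => ⊤
  | m + 2, j => (Finset.range j).sup fun i =>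
      min (bottleneckB y (m + 1) i) ((y j - y i : ℝ) : EReal)

private lemma ymono (n : ℕ) (y : ℕ → ℝ) (hy : ∀ r, r + 1 < n → y r < y (r + 1)) :
    ∀ b a, a ≤ b → b < n → y a ≤ y b := by
  intro b
  induction b with
  | zero => intro a ha _; interval_cases a; rfl
  | succ b ih =>
    intro a ha hb
    rcases Nat.lt_succ_iff_lt_or_eq.mp (Nat.lt_succ_of_le ha) with h | h
    · exact le_trans (ih a (Nat.lt_succ_iff.mp h) (by omega))
        (le_of_lt (hy b hb))
    · exact le_of_eq (congrArg y h)

private lemma lemB (n : ℕ) (y : ℕ → ℝ) :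
    ∀ m (c : ℕ → ℕ), StrictMonoOn c (Set.Iio (m + 1)) → (∀ r, r < m + 1 → c r < n) →
      sInf {d : EReal | ∃ r s, r < s ∧ s < m + 1 ∧ d = ((y (c s) - y (c r) : ℝ) : EReal)} ≤
        bottleneckB y (m + 1) (c m) := by
  intro m
  induction m with
  | zero => intro c _ _; simp [bottleneckB]
  | succ m ih =>
    intro c hc hcn
    have hlt : c m < c (m + 1) := hc (Set.mem_Iio.mpr (by omega)) (Set.mem_Iio.mpr (by omega)) (by omega)
    have step : bottleneckB y (m + 1 + 1) (c (m + 1)) = (Finset.range (c (m + 1))).sup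
        fun i => min (bottleneckB y (m + 1) i) ((y (c (m + 1)) - y i : ℝ) : EReal) := rfl
    rw [step]
    refine le_trans ?_ (Finset.le_sup (f := fun i =>
      min (bottleneckB y (m + 1) i) ((y (c (m + 1)) - y i : ℝ) : EReal))
      (Finset.mem_range.mpr hlt))
    refine le_min ?_ ?_
    · refine le_trans (sInf_le_sInf ?_) (ih c (hc.mono (by intro x hx; simp_all; omega))
        (fun r hr => hcn r (by omega)))
      rintro d ⟨r, s, hrs, hs, rfl⟩
      exact ⟨r, s, hrs, by omega, rfl⟩
    · exact sInf_le ⟨m, m + 1, by omega, by omega, rfl⟩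

private lemma lemA (n : ℕ) (y : ℕ → ℝ) (hy : ∀ r, r + 1 < n → y r < y (r + 1)) :
    ∀ m j, j < n → bottleneckB y (m + 1) j = ⊥ ∨ ∃ c : ℕ → ℕ,
      StrictMonoOn c (Set.Iio (m + 1)) ∧ (∀ r, r < m + 1 → c r < n) ∧ c m = j ∧
      bottleneckB y (m + 1) j ≤
        sInf {d : EReal | ∃ r s, r < s ∧ s < m + 1 ∧ d = ((y (c s) - y (c r) : ℝ) : EReal)} := by
  intro m
  induction m with
  | zero =>
    intro j hj
    right
    refine ⟨fun _ => j, ?_, fun r hr => by simpa using hj, rfl, ?_⟩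
    · intro a ha b hb hab; simp at ha hb; omega
    · have : {d : EReal | ∃ r s, r < s ∧ s < 0 + 1 ∧
          d = ((y j - y j : ℝ) : EReal)} = ∅ := by
        ext d; simp
      rw [this, sInf_empty]
      exact le_top
  | succ m ih =>
    intro j hj
    have step : bottleneckB y (m + 1 + 1) j = (Finset.range j).sup
        fun i => min (bottleneckB y (m + 1) i) ((y j - y i : ℝ) : EReal) := rfl
    rcases Nat.eq_zero_or_pos j with hj0 | hj0
    · left; rw [step, hj0]; simp
    · obtain ⟨i, hi, hsup⟩ := Finset.exists_mem_eq_sup (Finset.range j)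
        ⟨0, Finset.mem_range.mpr hj0⟩
        (fun i => min (bottleneckB y (m + 1) i) ((y j - y i : ℝ) : EReal))
      rw [Finset.mem_range] at hi
      rcases ih i (lt_trans hi hj) with hbot | ⟨c, hc, hcn, hci, hcB⟩
      · left; rw [step, hsup, hbot]; simp
      · right
        refine ⟨fun r => if r < m + 1 then c r else j, ?_, ?_, by simp, ?_⟩
        · intro a ha b hb hab
          simp only [Set.mem_Iio] at ha hb
          by_cases hbm : b < m + 1
          · simp only [if_pos hbm, if_pos (lt_trans hab hbm)]
            exact hc (by simpa using lt_trans hab hbm) (by simpa using hbm) hab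
          · have hb' : b = m + 1 := by omega
            have ham : a < m + 1 := by omega
            simp only [if_pos ham, if_neg hbm]
            have : c a ≤ c m := by
              rcases Nat.lt_or_ge a m with h | h
              · exact le_of_lt (hc (by simpa using Nat.lt_succ_of_lt h) (by simp) h)
              · have : a = m := by omega
                exact le_of_eq (congrArg c this)
            calc c a ≤ c m := this
              _ = i := hci
              _ < j := hi
        · intro r hr
          by_cases hrm : r < m + 1
          · simp only [if_pos hrm]; exact hcn r hrm
          · simp only [if_neg hrm]; exact hj
        · rw [step, hsup]
          refine le_sInf ?_
          rintro d ⟨r, s, hrs, hs, rfl⟩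
          by_cases hsm : s < m + 1
          · have hrm : r < m + 1 := lt_trans hrs hsm
            simp only [if_pos hsm, if_pos hrm]
            exact le_trans (min_le_left _ _) (le_trans hcB (sInf_le ⟨r, s, hrs, hsm, rfl⟩))
          · have hs' : s = m + 1 := by omega
            have hrm : r < m + 1 := by omega
            simp only [hs', if_neg (lt_irrefl (m+1)), if_pos hrm]
            refine le_trans (min_le_right _ _) ?_
            have hcr : c r ≤ i := by
              rw [← hci]
              rcases Nat.lt_or_ge r m with h | h
              · exact le_of_lt (hc (by simpa using Nat.lt_succ_of_lt h) (by simp) h)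
              · have : r = m := by omega
                exact le_of_eq (congrArg c this)
            have : y (c r) ≤ y i := ymono n y hy i (c r) hcr (lt_trans hi hj)
            exact EReal.coe_le_coe_iff.mpr (by linarith)

theorem stmt12 (n k : ℕ) (hk : 2 ≤ k) (y : ℕ → ℝ)
    (hy : ∀ r, r + 1 < n → y r < y (r + 1)) :
    (Finset.range n).sup (fun j => bottleneckB y k j)
      = sSup {v : EReal | ∃ c : ℕ → ℕ,
          StrictMonoOn c (Set.Iio k) ∧ (∀ r, r < k → c r < n) ∧
          v = sInf {d : EReal | ∃ r s, r < s ∧ s < k ∧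
                d = ((y (c s) - y (c r) : ℝ) : EReal)}} := by
  obtain ⟨m, rfl⟩ : ∃ m, k = m + 1 := ⟨k - 1, by omega⟩
  apply le_antisymm
  · refine Finset.sup_le fun j hj => ?_
    rw [Finset.mem_range] at hj
    rcases lemA n y hy m j hj with hbot | ⟨c, hc, hcn, _, hB⟩
    · rw [hbot]; exact bot_le
    · exact le_trans hB (le_sSup ⟨c, hc, hcn, rfl⟩)
  · refine sSup_le ?_
    rintro v ⟨c, hc, hcn, rfl⟩
    refine le_trans (lemB n y m c hc hcn) ?_
    exact Finset.le_sup (f := fun j => bottleneckB y (m + 1) j)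
      (Finset.mem_range.mpr (hcn m (by omega)))
end

section
/- Let q_1,...,q_n ∈ R^d. If for every 1 ≤ i < j ≤ n, ‖q_j - q_i‖_1 = Σ_{r=i}^{j-1} ‖q_{r+1} - q_r‖_1, then for each coordinate ℓ, the sequence q_{1ℓ}, q_{2ℓ}, ..., q_{nℓ} is monotone (nondecreasing or nonincreasing). -/
private lemma aux_sign (m : ℕ) (f : ℕ → ℝ)
    (h : ∑ r ∈ Finset.range m, f r = ∑ r ∈ Finset.range m, |f r|) :
    ∀ r < m, 0 ≤ f r := by
  by_contra hc
  push_neg at hc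
  obtain ⟨k, hk, hneg⟩ := hc
  have hlt : ∑ r ∈ Finset.range m, f r < ∑ r ∈ Finset.range m, |f r| := by
    refine Finset.sum_lt_sum (fun i _ => le_abs_self _) ⟨k, Finset.mem_range.2 hk, ?_⟩
    have : 0 < |f k| := abs_pos.2 (ne_of_lt hneg)
    linarith
  linarith

private lemma aux_mono (m : ℕ) (f : ℕ → ℝ) (h : ∀ r < m, f r ≤ f (r + 1)) :
    ∀ i j, i ≤ j → j ≤ m → f i ≤ f j := by
  intro i j
  induction j with
  | zero =>
      intro hij _
      have : i = 0 := Nat.le_zero.mp hij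
      rw [this]
  | succ j ih =>
      intro hij hjm
      rcases Nat.eq_or_lt_of_le hij with rfl | hij'
      · exact le_refl _
      · exact le_trans (ih (Nat.lt_succ_iff.mp hij') (by omega)) (h j (by omega))

theorem stmt16 (n d : ℕ) (Q : ℕ → Fin d → ℝ)
    (hadd : ∀ i j, i < j → j < n →
      ∑ ℓ, |Q j ℓ - Q i ℓ| = ∑ r ∈ Finset.Ico i j, ∑ ℓ, |Q (r + 1) ℓ - Q r ℓ|) :
    ∀ ℓ : Fin d,
      (∀ i j, i ≤ j → j < n → Q i ℓ ≤ Q j ℓ) ∨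
      (∀ i j, i ≤ j → j < n → Q j ℓ ≤ Q i ℓ) := by
  intro ℓ
  rcases Nat.lt_or_ge n 2 with hn | hn
  · left; intro i j hij hj
    have : i = j := by omega
    rw [this]
  · set m := n - 1 with hm
    have hm0 : 0 < m := by omega
    have hmn : m < n := by omega
    have key := hadd 0 m hm0 hmn
    rw [Nat.Ico_zero_eq_range, Finset.sum_comm] at key
    -- pointwise equality
    have hpt : ∀ ℓ' : Fin d, |Q m ℓ' - Q 0 ℓ'| =
        ∑ r ∈ Finset.range m, |Q (r + 1) ℓ' - Q r ℓ'| := by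
      intro ℓ'
      have hle : ∀ x : Fin d, |Q m x - Q 0 x| ≤
          ∑ r ∈ Finset.range m, |Q (r + 1) x - Q r x| := by
        intro x
        have ht : ∑ r ∈ Finset.range m, (Q (r + 1) x - Q r x) = Q m x - Q 0 x :=
          Finset.sum_range_sub (fun r => Q r x) m
        calc |Q m x - Q 0 x| = |∑ r ∈ Finset.range m, (Q (r + 1) x - Q r x)| := by rw [ht]
          _ ≤ ∑ r ∈ Finset.range m, |Q (r + 1) x - Q r x| :=
            Finset.abs_sum_le_sum_abs _ _
      by_contra hne
      have hlt : |Q m ℓ' - Q 0 ℓ'| < ∑ r ∈ Finset.range m, |Q (r + 1) ℓ' - Q r ℓ'| :=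
        lt_of_le_of_ne (hle ℓ') hne
      have : (∑ x, |Q m x - Q 0 x|) <
          ∑ x, ∑ r ∈ Finset.range m, |Q (r + 1) x - Q r x| :=
        Finset.sum_lt_sum (fun x _ => hle x) ⟨ℓ', Finset.mem_univ _, hlt⟩
      linarith [key]
    have heq := hpt ℓ
    have ht : ∑ r ∈ Finset.range m, (Q (r + 1) ℓ - Q r ℓ) = Q m ℓ - Q 0 ℓ :=
      Finset.sum_range_sub (fun r => Q r ℓ) m
    have hjm : ∀ j : ℕ, j < n → j ≤ m := by omega
    rcases le_or_gt (Q 0 ℓ) (Q m ℓ) with hS | hS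
    · left
      have habs : |Q m ℓ - Q 0 ℓ| = Q m ℓ - Q 0 ℓ := abs_of_nonneg (by linarith)
      have hsum : ∑ r ∈ Finset.range m, (Q (r + 1) ℓ - Q r ℓ) =
          ∑ r ∈ Finset.range m, |Q (r + 1) ℓ - Q r ℓ| := by
        rw [ht, ← habs, heq]
      have hpos := aux_sign m _ hsum
      intro i j hij hj
      exact aux_mono m (fun r => Q r ℓ) (fun r hr => by linarith [hpos r hr]) i j hij (hjm j hj)
    · right
      have habs : |Q m ℓ - Q 0 ℓ| = -(Q m ℓ - Q 0 ℓ) := abs_of_neg (by linarith)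
      have hsum : ∑ r ∈ Finset.range m, -(Q (r + 1) ℓ - Q r ℓ) =
          ∑ r ∈ Finset.range m, |-(Q (r + 1) ℓ - Q r ℓ)| := by
        simp only [abs_neg]
        rw [Finset.sum_neg_distrib, ht, ← habs, heq]
      have hpos := aux_sign m _ hsum
      intro i j hij hj
      have := aux_mono m (fun r => -Q r ℓ)
        (fun r hr => by have := hpos r hr; linarith)
        i j hij (hjm j hj)
      simpa using this
end

section
/- Let q_1,...,q_n ∈ R^d be given in a fixed order. The following are equivalent: (i) there is a sign vector σ ∈ {-1,+1}^d making all coordinate sequences σ_ℓ q_{iℓ} nondecreasing in i; (ii) ‖q_j - q_i‖_1 = Σ_{r=i}^{j-1} ‖q_{r+1} - q_r‖_1 for all i < j; (iii) there exist reals t_1 ≤ t_2 ≤ ... ≤ t_n with ‖q_j - q_i‖_1 = t_j - t_i for all i < j. -/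
private lemma telesc17 (f : ℕ → ℝ) {i j : ℕ} (h : i ≤ j) :
    ∑ r ∈ Finset.Ico i j, (f (r + 1) - f r) = f j - f i := by
  induction j, h using Nat.le_induction with
  | base => simp
  | succ j hij ih => rw [Finset.sum_Ico_succ_top hij, ih]; ring

private lemma star17 {n d : ℕ} {Q : ℕ → Fin d → ℝ}
    (hB : ∀ i j, i < j → j < n →
        ∑ ℓ, |Q j ℓ - Q i ℓ| = ∑ r ∈ Finset.Ico i j, ∑ ℓ, |Q (r + 1) ℓ - Q r ℓ|)
    (ℓ : Fin d) {i j : ℕ} (hij : i < j) (hj : j < n) :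
    |Q j ℓ - Q i ℓ| = ∑ r ∈ Finset.Ico i j, |Q (r + 1) ℓ - Q r ℓ| := by
  have hle : ∀ l : Fin d, |Q j l - Q i l| ≤ ∑ r ∈ Finset.Ico i j, |Q (r + 1) l - Q r l| := by
    intro l
    have h1 := telesc17 (fun r => Q r l) hij.le
    calc |Q j l - Q i l| = |∑ r ∈ Finset.Ico i j, (Q (r + 1) l - Q r l)| := by rw [h1]
      _ ≤ _ := Finset.abs_sum_le_sum_abs _ _
  have hsum : ∑ l, |Q j l - Q i l| = ∑ l, ∑ r ∈ Finset.Ico i j, |Q (r + 1) l - Q r l| := by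
    rw [hB i j hij hj, Finset.sum_comm]
  exact (Finset.sum_eq_sum_iff_of_le (fun l _ => hle l)).1 hsum ℓ (Finset.mem_univ ℓ)

private lemma nostrict17 {n : ℕ} {f : ℕ → ℝ}
    (hst : ∀ i j, i < j → j < n → |f j - f i| = ∑ r ∈ Finset.Ico i j, |f (r + 1) - f r|)
    {u v : ℕ} (huv : u < v) (hv : v + 1 < n)
    (hop : (f (u + 1) - f u) * (f (v + 1) - f v) < 0) : False := by
  set x := f (u + 1) - f u with hx
  set y := f (v + 1) - f v with hy
  have hxy : |x + y| < |x| + |y| := by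
    rcases mul_neg_iff.1 hop with ⟨h1, h2⟩ | ⟨h1, h2⟩
    · rw [abs_of_pos h1, abs_of_neg h2, abs_lt]; constructor <;> linarith
    · rw [abs_of_neg h1, abs_of_pos h2, abs_lt]; constructor <;> linarith
  set g : ℕ → ℝ := fun r => |f (r + 1) - f r| with hg
  have habs : ∑ r ∈ Finset.Ico u (v + 1), g r = g u + ∑ r ∈ Finset.Ico (u + 1) v, g r + g v := by
    rw [Finset.sum_Ico_succ_top huv.le, Finset.sum_eq_sum_Ico_succ_bot huv]
  set M := ∑ r ∈ Finset.Ico (u + 1) v, (f (r + 1) - f r) with hM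
  have hMval : M = f v - f (u + 1) := telesc17 f huv
  have hMle : |M| ≤ ∑ r ∈ Finset.Ico (u + 1) v, g r := Finset.abs_sum_le_sum_abs _ _
  have hT : |f (v + 1) - f u| ≤ |x + y| + |M| := by
    have : f (v + 1) - f u = (x + y) + M := by rw [hMval]; ring
    rw [this]; exact abs_add_le _ _
  have hmain := hst u (v + 1) (huv.trans (Nat.lt_succ_self v)) hv
  rw [habs] at hmain
  have : g u = |x| := rfl
  have : g v = |y| := rfl
  simp only [hg] at hmain
  rw [← hx, ← hy] at hmain
  linarith

theorem stmt17 (n d : ℕ) (Q : ℕ → Fin d → ℝ) :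
    ((∃ σ : Fin d → ℝ, (∀ ℓ, σ ℓ = 1 ∨ σ ℓ = -1) ∧
        ∀ ℓ : Fin d, ∀ i j, i ≤ j → j < n → σ ℓ * Q i ℓ ≤ σ ℓ * Q j ℓ) ↔
      (∀ i j, i < j → j < n →
        ∑ ℓ, |Q j ℓ - Q i ℓ| = ∑ r ∈ Finset.Ico i j, ∑ ℓ, |Q (r + 1) ℓ - Q r ℓ|))
    ∧ ((∀ i j, i < j → j < n →
        ∑ ℓ, |Q j ℓ - Q i ℓ| = ∑ r ∈ Finset.Ico i j, ∑ ℓ, |Q (r + 1) ℓ - Q r ℓ|) ↔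
      (∃ t : ℕ → ℝ, (∀ i j, i ≤ j → j < n → t i ≤ t j) ∧
        ∀ i j, i < j → j < n → ∑ ℓ, |Q j ℓ - Q i ℓ| = t j - t i)) := by
  classical
  constructor
  · constructor
    · -- A → B
      rintro ⟨σ, hσ1, hσ2⟩ i j hij hj
      have key : ∀ a b : ℕ, a ≤ b → b < n →
          ∀ ℓ : Fin d, |Q b ℓ - Q a ℓ| = σ ℓ * (Q b ℓ - Q a ℓ) := by
        intro a b hab hb ℓ
        have h1 : 0 ≤ σ ℓ * Q b ℓ - σ ℓ * Q a ℓ := by linarith [hσ2 ℓ a b hab hb]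
        have h2 : |σ ℓ| = 1 := by rcases hσ1 ℓ with h | h <;> simp [h]
        calc |Q b ℓ - Q a ℓ| = |σ ℓ| * |Q b ℓ - Q a ℓ| := by rw [h2, one_mul]
          _ = |σ ℓ * (Q b ℓ - Q a ℓ)| := (abs_mul _ _).symm
          _ = σ ℓ * (Q b ℓ - Q a ℓ) := abs_of_nonneg (by nlinarith)
      rw [Finset.sum_comm]
      refine Finset.sum_congr rfl fun ℓ _ => ?_
      rw [key i j hij.le hj ℓ]
      have : ∀ r ∈ Finset.Ico i j, |Q (r + 1) ℓ - Q r ℓ| = σ ℓ * Q (r + 1) ℓ - σ ℓ * Q r ℓ := by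
        intro r hr
        rw [Finset.mem_Ico] at hr
        have := key r (r + 1) (Nat.le_succ r) (Nat.lt_of_le_of_lt hr.2 hj) ℓ
        rw [this]; ring
      rw [Finset.sum_congr rfl this, telesc17 (fun r => σ ℓ * Q r ℓ) hij.le]
      ring
    · -- B → A
      intro hB
      set σ : Fin d → ℝ := fun ℓ =>
        if ∃ r, r + 1 < n ∧ Q (r + 1) ℓ < Q r ℓ then -1 else 1 with hσdef
      refine ⟨σ, fun ℓ => by by_cases h : ∃ r, r + 1 < n ∧ Q (r + 1) ℓ < Q r ℓ <;>
        simp [hσdef, h], ?_⟩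
      have hinc : ∀ ℓ : Fin d, ∀ r, r + 1 < n → 0 ≤ σ ℓ * Q (r + 1) ℓ - σ ℓ * Q r ℓ := by
        intro ℓ r hr
        have hst : ∀ i j, i < j → j < n →
            |Q j ℓ - Q i ℓ| = ∑ s ∈ Finset.Ico i j, |Q (s + 1) ℓ - Q s ℓ| :=
          fun i j hij hj => star17 hB ℓ hij hj
        by_cases h : ∃ b, b + 1 < n ∧ Q (b + 1) ℓ < Q b ℓ
        · have hσ : σ ℓ = -1 := by simp [hσdef, h]
          rw [hσ]
          obtain ⟨b, hb, hbneg⟩ := h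
          have hle : Q (r + 1) ℓ ≤ Q r ℓ := by
            by_contra hc
            push_neg at hc
            have hrb : r ≠ b := by rintro rfl; exact absurd hbneg (not_lt.2 hc.le)
            rcases hrb.lt_or_gt with h1 | h1
            · exact nostrict17 hst h1 hb
                (mul_neg_of_pos_of_neg (by linarith) (by linarith))
            · exact nostrict17 hst h1 hr
                (mul_neg_of_neg_of_pos (by linarith) (by linarith))
          nlinarith
        · have hσ : σ ℓ = 1 := by simp [hσdef, h]
          rw [hσ]
          push_neg at h
          have := h r hr
          nlinarith
      intro ℓ i j hij hj
      have : σ ℓ * Q j ℓ - σ ℓ * Q i ℓ =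
          ∑ r ∈ Finset.Ico i j, (σ ℓ * Q (r + 1) ℓ - σ ℓ * Q r ℓ) :=
        (telesc17 (fun r => σ ℓ * Q r ℓ) hij).symm
      have hnn : 0 ≤ σ ℓ * Q j ℓ - σ ℓ * Q i ℓ := by
        rw [this]
        refine Finset.sum_nonneg fun r hr => ?_
        rw [Finset.mem_Ico] at hr
        exact hinc ℓ r (Nat.lt_of_le_of_lt hr.2 hj)
      linarith
  · constructor
    · -- B → C
      intro hB
      refine ⟨fun i => ∑ r ∈ Finset.range i, ∑ ℓ, |Q (r + 1) ℓ - Q r ℓ|, ?_, ?_⟩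
      · intro i j hij _
        rw [← sub_nonneg, ← Finset.sum_Ico_eq_sub _ hij]
        exact Finset.sum_nonneg fun r _ => Finset.sum_nonneg fun ℓ _ => abs_nonneg _
      · intro i j hij hj
        rw [← Finset.sum_Ico_eq_sub _ hij.le]
        exact hB i j hij hj
    · -- C → B
      rintro ⟨t, _, hC⟩ i j hij hj
      have : ∀ r ∈ Finset.Ico i j, ∑ ℓ, |Q (r + 1) ℓ - Q r ℓ| = t (r + 1) - t r := by
        intro r hr
        rw [Finset.mem_Ico] at hr
        exact hC r (r + 1) (Nat.lt_succ_self r) (Nat.lt_of_le_of_lt hr.2 hj)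
      rw [Finset.sum_congr rfl this, telesc17 t hij.le, hC i j hij hj]
end
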